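/- (Unitarity of the operator S, finite-group version.) For all x, y ∈ A one has ∑_{z ∈ A} g(x−z) · conj(g(y−z)) = |A| · δ(x−y), where conj denotes complex conjugation and |A| is the cardinality of A. In particular, the matrix (|A|^{−1/2}·g(x−y))_{x,y ∈ A} is unitary. -/

import Mathlib

open Finset

/-- Unitarity of the operator `S`, finite-group version: the kernel
`S(x,y) = g(x-y)` satisfies `∑_z g(x-z) conj (g(y-z)) = |A| δ(x-y)`, and the
matrix `|A|^{-1/2} g(x-y)` is unitary. -/
theorem S_operator_unitary
    {A : Type*} [AddCommGroup A] [Fintype A] [DecidableEq A]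
    (g : A → ℂ) (hg_abs : ∀ x, ‖g x‖ = 1) (hg_sym : ∀ x, g (-x) = g x)
    (χ : A → A → ℂ) (hχ : ∀ x y, χ x y = g x * g y * (g (x + y))⁻¹)
    (hχ_add : ∀ x x' y, χ (x + x') y = χ x y * χ x' y)
    (hχ_nondeg : ∀ x : A, x ≠ 0 → ∃ y : A, χ x y ≠ 1)
    (δ : A → ℂ) (hδ : ∀ a, δ a = if a = 0 then 1 else 0) :
    (∀ x y : A,
        ∑ z : A, g (x - z) * (starRingEnd ℂ) (g (y - z))
          = (Fintype.card A : ℂ) * δ (x - y)) ∧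
    (Matrix.of (fun x y : A =>
        ((Real.sqrt (Fintype.card A) : ℂ))⁻¹ * g (x - y)) ∈ Matrix.unitaryGroup A ℂ) := by
  have hgne : ∀ x, g x ≠ 0 := by
    intro x hx
    have := hg_abs x
    rw [hx] at this
    simp at this
  have hg0 : g 0 = 1 := by
    have hc : χ 0 0 = g 0 := by rw [hχ]; simp
    have h2 : χ 0 0 = χ 0 0 * χ 0 0 := by
      have := hχ_add 0 0 0; rwa [add_zero] at this
    have : χ 0 0 ≠ 0 := by rw [hc]; exact hgne 0
    have h3 : χ 0 0 = 1 := by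
      refine (mul_left_cancel₀ this ?_).symm
      rw [mul_one, ← h2]
    rw [hc] at h3; exact h3
  have hχne : ∀ a w, χ a w ≠ 0 := by
    intro a w
    rw [hχ]
    exact mul_ne_zero (mul_ne_zero (hgne a) (hgne w)) (inv_ne_zero (hgne _))
  have hχsym : ∀ a w, χ a w = χ w a := by
    intro a w; rw [hχ, hχ, add_comm]; ring
  have hχ_add2 : ∀ a w w', χ a (w + w') = χ a w * χ a w' := by
    intro a w w'
    rw [hχsym, hχ_add, hχsym, hχsym w']
  -- key character sum
  have key : ∀ a : A, a ≠ 0 → ∑ w : A, (χ a w)⁻¹ = 0 := by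
    intro a ha
    obtain ⟨y0, hy0⟩ := hχ_nondeg a ha
    set S := ∑ w : A, (χ a w)⁻¹ with hS
    have hshift : (χ a y0)⁻¹ * S = S := by
      rw [hS, Finset.mul_sum]
      rw [← Equiv.sum_comp (Equiv.addRight y0) (fun w => (χ a w)⁻¹)]
      apply Finset.sum_congr rfl
      intro w _
      simp only [Equiv.coe_addRight]
      rw [hχ_add2, mul_inv, mul_comm]
    have : ((χ a y0)⁻¹ - 1) * S = 0 := by rw [sub_mul, one_mul, hshift, sub_self]
    rcases mul_eq_zero.mp this with h | h
    · exfalso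
      apply hy0
      have : (χ a y0)⁻¹ = 1 := by linear_combination h
      rw [inv_eq_one] at this; exact this
    · exact h
  have hconj : ∀ w : A, (starRingEnd ℂ) (g w) = (g w)⁻¹ := by
    intro w
    rw [Complex.inv_def]
    simp [Complex.normSq_eq_norm_sq, hg_abs]
  have main : ∀ x y : A,
      ∑ z : A, g (x - z) * (starRingEnd ℂ) (g (y - z))
        = (Fintype.card A : ℂ) * δ (x - y) := by
    intro x y
    have hterm : ∀ z : A, g (x - z) * (starRingEnd ℂ) (g (y - z))
        = g (x - y) * (χ (x - y) (y - z))⁻¹ := by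
      intro z
      rw [hconj]
      have hx : x - z = (x - y) + (y - z) := by abel
      rw [hx, hχ]
      have h1 := hgne (x - y); have h2 := hgne (y - z); have h3 := hgne ((x-y)+(y-z))
      field_simp
    simp only [hterm]
    rw [← Finset.mul_sum]
    by_cases h : x - y = 0
    · rw [h, hg0, one_mul, hδ, if_pos rfl, mul_one]
      have : ∀ w : A, (χ (0:A) w)⁻¹ = 1 := by
        intro w
        rw [hχ, hg0, zero_add, one_mul, mul_inv_cancel₀ (hgne w), inv_one]
      simp only [this]
      simp
    · rw [hδ, if_neg h, mul_zero]
      have : ∑ z : A, (χ (x - y) (y - z))⁻¹ = ∑ w : A, (χ (x - y) w)⁻¹ := by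
        exact Fintype.sum_equiv (Equiv.subLeft y) _ _ (fun z => rfl)
      rw [this, key _ h, mul_zero]
  refine ⟨main, ?_⟩
  rw [Matrix.mem_unitaryGroup_iff]
  ext x y
  have hn : (0:ℝ) < Fintype.card A := by positivity
  have hs : Real.sqrt (Fintype.card A) ≠ 0 := by positivity
  have hsC : ((Real.sqrt (Fintype.card A) : ℂ)) ≠ 0 := by exact_mod_cast hs
  simp only [Matrix.mul_apply, Matrix.star_apply, Matrix.of_apply, Complex.star_def,
    Matrix.one_apply]
  have : ∀ z : A, ((Real.sqrt (Fintype.card A) : ℂ))⁻¹ * g (x - z) *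
      (starRingEnd ℂ) (((Real.sqrt (Fintype.card A) : ℂ))⁻¹ * g (y - z))
      = ((Real.sqrt (Fintype.card A) : ℂ))⁻¹ * ((Real.sqrt (Fintype.card A) : ℂ))⁻¹ *
        (g (x - z) * (starRingEnd ℂ) (g (y - z))) := by
    intro z
    rw [map_mul]
    have : (starRingEnd ℂ) (((Real.sqrt (Fintype.card A) : ℂ))⁻¹)
        = ((Real.sqrt (Fintype.card A) : ℂ))⁻¹ := by
      rw [map_inv₀, Complex.conj_ofReal]
    rw [this]; ring
  simp only [this]
  rw [← Finset.mul_sum, main x y]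
  have hsq : ((Real.sqrt (Fintype.card A) : ℂ))⁻¹ * ((Real.sqrt (Fintype.card A) : ℂ))⁻¹ *
      (Fintype.card A : ℂ) = 1 := by
    have : Nonempty A := ⟨0⟩
    have hcard : (Fintype.card A : ℂ) ≠ 0 := Nat.cast_ne_zero.mpr Fintype.card_ne_zero
    have h1 : ((Real.sqrt (Fintype.card A) : ℂ)) * ((Real.sqrt (Fintype.card A) : ℂ))
        = (Fintype.card A : ℂ) := by
      rw [← Complex.ofReal_mul, Real.mul_self_sqrt (le_of_lt hn)]
      push_cast
      ring
    rw [← mul_inv, h1, inv_mul_cancel₀ hcard]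
  rw [← mul_assoc, hsq, one_mul, hδ]
  by_cases h : x = y
  · subst h; simp
  · rw [if_neg h, if_neg (fun hs => h (sub_eq_zero.mp hs))]
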